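/- The visual boundary of ℤ² with the standard generating set carries the trivial (indiscrete) topology: the only open subsets of ∂_∞(ℤ²) are ∅ and ∂_∞(ℤ²) itself. -/

import Mathlib

open scoped NNReal UniformConvergence

/-- `ℝ²` with the ℓ¹ metric. -/
abbrev PlaneL1 : Type := PiLp 1 (fun _ : Fin 2 => ℝ)

/-- The Cayley graph of `ℤ²` with the standard generators, realized as the
integer grid inside `(ℝ², ℓ¹)`. -/
def Grid : Set PlaneL1 := {p | (∃ n : ℤ, p 0 = (n : ℝ)) ∨ ∃ n : ℤ, p 1 = (n : ℝ)}

/-- The space of unit-speed geodesic rays from `0` in `Cay(ℤ², {(1,0),(0,1)})`,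
viewed as maps `[0,∞) → Cay(ℤ²) ⊆ (ℝ², ℓ¹)` traversing edges at unit speed,
with the topology of uniform convergence on compact sets. -/
def RaySpace : Type :=
  {f : ℝ≥0 →ᵤ[{K : Set ℝ≥0 | IsCompact K}] PlaneL1 //
    (UniformOnFun.toFun _ f) 0 = 0 ∧
    (∀ t : ℝ≥0, (UniformOnFun.toFun _ f) t ∈ Grid) ∧
    ∀ s t : ℝ≥0, dist ((UniformOnFun.toFun _ f) s) ((UniformOnFun.toFun _ f) t) = dist s t}

noncomputable instance : TopologicalSpace RaySpace :=
  inferInstanceAs (TopologicalSpace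
    {f : ℝ≥0 →ᵤ[{K : Set ℝ≥0 | IsCompact K}] PlaneL1 //
      (UniformOnFun.toFun _ f) 0 = 0 ∧
      (∀ t : ℝ≥0, (UniformOnFun.toFun _ f) t ∈ Grid) ∧
      ∀ s t : ℝ≥0, dist ((UniformOnFun.toFun _ f) s) ((UniformOnFun.toFun _ f) t) = dist s t})

/-- The asymptotic relation on geodesic rays. -/
def AsympRel (f g : RaySpace) : Prop :=
  ∃ M : ℝ, ∀ t : ℝ≥0,
    dist ((UniformOnFun.toFun _ f.1) t) ((UniformOnFun.toFun _ g.1) t) ≤ M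

namespace VB

abbrev SS : Set (Set ℝ≥0) := {K : Set ℝ≥0 | IsCompact K}

abbrev F (f : RaySpace) : ℝ≥0 → PlaneL1 := UniformOnFun.toFun SS f.1

def mkP (a b : ℝ) : PlaneL1 := (WithLp.equiv 1 _).symm ![a, b]

@[simp] lemma mkP_zero (a b : ℝ) : mkP a b 0 = a := rfl
@[simp] lemma mkP_one (a b : ℝ) : mkP a b 1 = b := rfl

lemma planeL1_dist (p q : PlaneL1) : dist p q = |p 0 - q 0| + |p 1 - q 1| := by
  rw [PiLp.dist_eq_sum (by norm_num : (0:ℝ) < ENNReal.toReal 1)]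
  simp [Fin.sum_univ_two, Real.dist_eq]


lemma planeL1_zero (i : Fin 2) : (0 : PlaneL1) i = 0 := rfl

def mkRay (H : ℝ≥0 → PlaneL1) (h0 : H 0 = 0) (hg : ∀ t, H t ∈ Grid)
    (hi : ∀ s t, dist (H s) (H t) = dist s t) : RaySpace :=
  ⟨UniformOnFun.ofFun SS H, h0, hg, hi⟩

@[simp] lemma F_mkRay (H h0 hg hi) : F (mkRay H h0 hg hi) = H := rfl


lemma ray_iso (f : RaySpace) {s t : ℝ≥0} (hst : s ≤ t) :
    |F f t 0 - F f s 0| + |F f t 1 - F f s 1| = (t : ℝ) - s := by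
  have h := f.2.2.2 s t
  rw [planeL1_dist] at h
  rw [NNReal.dist_eq] at h
  rw [abs_sub_comm (F f s 0), abs_sub_comm (F f s 1)] at h
  rw [h, abs_sub_comm, abs_of_nonneg (by simpa using hst)]

lemma F_zero (f : RaySpace) (i : Fin 2) : F f 0 i = 0 := by
  have := f.2.1
  rw [show (UniformOnFun.toFun _ f.1) = F f from rfl] at this
  rw [this]; exact planeL1_zero i

lemma split (f : RaySpace) (i : Fin 2) {s u t : ℝ≥0} (h1 : s ≤ u) (h2 : u ≤ t) :
    |F f t i - F f s i| = |F f u i - F f s i| + |F f t i - F f u i| := by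
  have A := ray_iso f h1
  have B := ray_iso f h2
  have C := ray_iso f (h1.trans h2)
  have T0 : |F f t 0 - F f s 0| ≤ |F f u 0 - F f s 0| + |F f t 0 - F f u 0| := by
    have := abs_sub_le (F f t 0) (F f u 0) (F f s 0); linarith [abs_sub_comm (F f t 0) (F f u 0), abs_sub_comm (F f u 0) (F f s 0), abs_sub_comm (F f t 0) (F f s 0), abs_sub_le (F f t 0) (F f u 0) (F f s 0)]
  have T1 : |F f t 1 - F f s 1| ≤ |F f u 1 - F f s 1| + |F f t 1 - F f u 1| := by
    linarith [abs_sub_comm (F f t 1) (F f u 1), abs_sub_comm (F f u 1) (F f s 1), abs_sub_comm (F f t 1) (F f s 1), abs_sub_le (F f t 1) (F f u 1) (F f s 1)]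
  have hc : ((t:ℝ) - s) = ((u:ℝ) - s) + ((t:ℝ) - u) := by ring
  rcases Fin.exists_fin_two.mp ⟨i, rfl⟩ with h | h <;> subst h <;> linarith

lemma sign_at (f : RaySpace) (i : Fin 2) (N : ℝ≥0) :
    ∃ ε : ℝ, (ε = 1 ∨ ε = -1) ∧ ∀ s, s ≤ N → 0 ≤ ε * (F f N i - F f s i) := by
  rcases le_or_gt 0 (F f N i) with h | h
  · refine ⟨1, Or.inl rfl, fun s hs => ?_⟩
    have hsp := split f i (zero_le (a := s)) hs
    rw [F_zero, sub_zero, sub_zero] at hsp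
    rcases le_or_gt (F f s i) (F f N i) with h2 | h2
    · nlinarith
    · have e1 : |F f N i - F f s i| = F f s i - F f N i := by
        rw [abs_of_neg (by linarith)]; ring
      have e2 : |F f N i| = F f N i := abs_of_nonneg h
      have e3 : F f s i ≤ |F f s i| := le_abs_self _
      nlinarith
  · refine ⟨-1, Or.inr rfl, fun s hs => ?_⟩
    have hsp := split f i (zero_le (a := s)) hs
    rw [F_zero, sub_zero, sub_zero] at hsp
    rcases le_or_gt (F f N i) (F f s i) with h2 | h2
    · nlinarith
    · have e1 : |F f N i - F f s i| = F f N i - F f s i := abs_of_nonneg (by linarith)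
      have e2 : |F f N i| = -(F f N i) := abs_of_neg h
      have e3 : -(F f s i) ≤ |F f s i| := neg_le_abs _
      nlinarith

lemma sign_global (f : RaySpace) (i : Fin 2) :
    ∃ ε : ℝ, (ε = 1 ∨ ε = -1) ∧ ∀ t, 0 ≤ ε * F f t i := by
  by_cases h : ∀ t, 0 ≤ F f t i
  · exact ⟨1, Or.inl rfl, fun t => by simpa using h t⟩
  · push_neg at h
    obtain ⟨t0, ht0⟩ := h
    refine ⟨-1, Or.inr rfl, fun t => ?_⟩
    have key : F f t i ≤ 0 := by
      by_contra hpos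
      push_neg at hpos
      have habs : |F f t i| = F f t i := abs_of_pos hpos
      have e2 : |F f t0 i| = -(F f t0 i) := abs_of_neg ht0
      rcases le_total t t0 with hle | hle
      · have hsp := split f i (zero_le (a := t)) hle
        rw [F_zero, sub_zero, sub_zero] at hsp
        have e3 : F f t i - F f t0 i ≤ |F f t0 i - F f t i| := by
          rw [abs_sub_comm]; exact le_abs_self _
        linarith
      · have hsp := split f i (zero_le (a := t0)) hle
        rw [F_zero, sub_zero, sub_zero] at hsp
        have e3 : F f t i - F f t0 i ≤ |F f t i - F f t0 i| := le_abs_self _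
        linarith
    nlinarith


lemma abs_unit_mul {ε : ℝ} (hε : ε = 1 ∨ ε = -1) (x : ℝ) : |ε * x| = |x| := by
  rcases hε with rfl | rfl <;> simp

lemma dist_nn {s t : ℝ≥0} (h : s ≤ t) : dist s t = (t : ℝ) - s := by
  rw [NNReal.dist_eq, abs_sub_comm, abs_of_nonneg (by simpa using h)]

lemma mkP_eq_zero : mkP 0 0 = (0 : PlaneL1) := by
  ext i
  rcases Fin.exists_fin_two.mp ⟨i, rfl⟩ with h | h <;> subst h <;> rfl

def axisV (ε : ℝ) (hε : ε = 1 ∨ ε = -1) : RaySpace :=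
  mkRay (fun t => mkP 0 (ε * (t : ℝ)))
    (by simpa using mkP_eq_zero)
    (fun t => Or.inl ⟨0, by simp⟩)
    (by
      intro s t
      rcases le_total s t with h | h
      · rw [planeL1_dist, dist_nn h]
        simp only [mkP_zero, mkP_one, sub_self, abs_zero, zero_add]
        rw [show ε * (s:ℝ) - ε * t = ε * ((s:ℝ) - t) from by ring, abs_unit_mul hε,
          abs_sub_comm, abs_of_nonneg (by simpa using h)]
      · rw [planeL1_dist, dist_comm, dist_nn h]
        simp only [mkP_zero, mkP_one, sub_self, abs_zero, zero_add]
        rw [show ε * (s:ℝ) - ε * t = ε * ((s:ℝ) - t) from by ring, abs_unit_mul hε,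
          abs_of_nonneg (by simpa using h)])

def axisH (ε : ℝ) (hε : ε = 1 ∨ ε = -1) : RaySpace :=
  mkRay (fun t => mkP (ε * (t : ℝ)) 0)
    (by simpa using mkP_eq_zero)
    (fun t => Or.inr ⟨0, by simp⟩)
    (by
      intro s t
      rcases le_total s t with h | h
      · rw [planeL1_dist, dist_nn h]
        simp only [mkP_zero, mkP_one, sub_self, abs_zero, add_zero]
        rw [show ε * (s:ℝ) - ε * t = ε * ((s:ℝ) - t) from by ring, abs_unit_mul hε,
          abs_sub_comm, abs_of_nonneg (by simpa using h)]
      · rw [planeL1_dist, dist_comm, dist_nn h]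
        simp only [mkP_zero, mkP_one, sub_self, abs_zero, add_zero]
        rw [show ε * (s:ℝ) - ε * t = ε * ((s:ℝ) - t) from by ring, abs_unit_mul hε,
          abs_of_nonneg (by simpa using h)])

@[simp] lemma F_axisV (ε hε t) : F (axisV ε hε) t = mkP 0 (ε * (t : ℝ)) := rfl
@[simp] lemma F_axisH (ε hε t) : F (axisH ε hε) t = mkP (ε * (t : ℝ)) 0 := rfl



lemma bend_vert (f : RaySpace) (N : ℝ≥0) (m : ℤ) (hm : F f N 0 = (m : ℝ))
    (ε : ℝ) (hε : ε = 1 ∨ ε = -1)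
    (hsign : ∀ s, s ≤ N → 0 ≤ ε * (F f N 1 - F f s 1)) :
    ∃ h : RaySpace, (∀ t, t ≤ N → F h t = F f t) ∧ AsympRel h (axisV ε hε) := by
  set a := F f N 0 with ha
  set b := F f N 1 with hb
  set H : ℝ≥0 → PlaneL1 :=
    fun t => if t ≤ N then F f t else mkP a (b + ε * ((t : ℝ) - N)) with hHdef
  have hagree : ∀ t, t ≤ N → H t = F f t := fun t ht => if_pos ht
  have hHat : ∀ t, N < t → H t = mkP a (b + ε * ((t : ℝ) - N)) :=
    fun t ht => if_neg (not_le.mpr ht)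
  have key : ∀ s t : ℝ≥0, s ≤ t → dist (H s) (H t) = (t : ℝ) - s := by
    intro s t hst
    rcases le_or_gt t N with htN | htN
    · rw [hagree s (hst.trans htN), hagree t htN, f.2.2.2 s t, dist_nn hst]
    · have htN' : (N : ℝ) ≤ t := by exact_mod_cast htN.le
      rcases le_or_gt s N with hsN | hsN
      · have hsN' : (s : ℝ) ≤ N := by exact_mod_cast hsN
        rw [hagree s hsN, hHat t htN, planeL1_dist]
        simp only [mkP_zero, mkP_one]
        have hiso := ray_iso f hsN
        have hs1 := hsign s hsN
        have c0 : |F f s 0 - a| = |a - F f s 0| := abs_sub_comm _ _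
        rcases hε with rfl | rfl
        · have hb1 : 0 ≤ b - F f s 1 := by linarith [hs1]
          have e1 : |F f s 1 - (b + 1 * ((t : ℝ) - N))| = (b - F f s 1) + ((t : ℝ) - N) := by
            rw [abs_of_nonpos (by linarith)]; ring
          have e2 : |b - F f s 1| = b - F f s 1 := abs_of_nonneg hb1
          rw [e1, c0]
          linarith
        · have hb1 : 0 ≤ F f s 1 - b := by nlinarith [hs1]
          have e1 : |F f s 1 - (b + (-1) * ((t : ℝ) - N))| = (F f s 1 - b) + ((t : ℝ) - N) := by
            rw [abs_of_nonneg (by linarith)]; ring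
          have e2 : |b - F f s 1| = F f s 1 - b := by rw [abs_sub_comm]; exact abs_of_nonneg hb1
          rw [e1, c0]
          linarith
      · rw [hHat s hsN, hHat t (hsN.trans_le hst), planeL1_dist]
        simp only [mkP_zero, mkP_one]
        have : b + ε * ((s : ℝ) - N) - (b + ε * ((t : ℝ) - N)) = ε * ((s : ℝ) - t) := by ring
        rw [sub_self, abs_zero, zero_add, this, abs_unit_mul hε, abs_sub_comm,
          abs_of_nonneg (by simpa using hst)]
  have hiso : ∀ s t, dist (H s) (H t) = dist s t := by
    intro s t
    rcases le_total s t with h | h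
    · rw [key s t h, dist_nn h]
    · rw [dist_comm, key t s h, dist_comm, dist_nn h]
  have h0 : H 0 = 0 := by rw [hagree 0 (zero_le (a := N))]; exact f.2.1
  have hgrid : ∀ t, H t ∈ Grid := by
    intro t
    rcases le_or_gt t N with ht | ht
    · rw [hagree t ht]; exact f.2.2.1 t
    · rw [hHat t ht]; exact Or.inl ⟨m, by simpa using hm⟩
  refine ⟨mkRay H h0 hgrid hiso, fun t ht => hagree t ht, ⟨2 * N + |a| + |b|, ?_⟩⟩
  intro t
  show dist (H t) (mkP 0 (ε * (t : ℝ))) ≤ 2 * N + |a| + |b|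
  rcases le_or_gt t N with ht | ht
  · have ht' : (t : ℝ) ≤ N := by exact_mod_cast ht
    have d1 : dist (H t) (H 0) = (t : ℝ) := by
      rw [dist_comm, key 0 t (zero_le (a := t))]; simp
    have d2 : dist (0 : PlaneL1) (mkP 0 (ε * (t : ℝ))) = (t : ℝ) := by
      rw [planeL1_dist, planeL1_zero, planeL1_zero, mkP_zero, mkP_one, sub_self, abs_zero,
        zero_add, zero_sub, abs_neg, abs_unit_mul hε, abs_of_nonneg t.coe_nonneg]
    calc dist (H t) (mkP 0 (ε * (t : ℝ)))
        ≤ dist (H t) (H 0) + dist (H 0) (mkP 0 (ε * (t : ℝ))) := dist_triangle _ _ _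
      _ = (t : ℝ) + (t : ℝ) := by rw [d1, h0, d2]
      _ ≤ 2 * N + |a| + |b| := by linarith [abs_nonneg a, abs_nonneg b]
  · have htN' : (N : ℝ) ≤ t := by exact_mod_cast ht.le
    rw [hHat t ht, planeL1_dist]
    simp only [mkP_zero, mkP_one]
    rw [sub_zero]
    have e : b + ε * ((t : ℝ) - N) - ε * (t : ℝ) = b - ε * N := by ring
    rw [e]
    have : |b - ε * N| ≤ |b| + |ε * N| := abs_sub _ _
    have hN : |ε * (N : ℝ)| = (N : ℝ) := by rw [abs_unit_mul hε, abs_of_nonneg N.coe_nonneg]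
    have : (0:ℝ) ≤ N := N.coe_nonneg
    linarith [abs_sub (b) (ε * (N:ℝ)), abs_nonneg a]



lemma bend_horiz (f : RaySpace) (N : ℝ≥0) (m : ℤ) (hm : F f N 1 = (m : ℝ))
    (ε : ℝ) (hε : ε = 1 ∨ ε = -1)
    (hsign : ∀ s, s ≤ N → 0 ≤ ε * (F f N 0 - F f s 0)) :
    ∃ h : RaySpace, (∀ t, t ≤ N → F h t = F f t) ∧ AsympRel h (axisH ε hε) := by
  set a := F f N 1 with ha
  set b := F f N 0 with hb
  set H : ℝ≥0 → PlaneL1 :=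
    fun t => if t ≤ N then F f t else mkP (b + ε * ((t : ℝ) - N)) a with hHdef
  have hagree : ∀ t, t ≤ N → H t = F f t := fun t ht => if_pos ht
  have hHat : ∀ t, N < t → H t = mkP (b + ε * ((t : ℝ) - N)) a :=
    fun t ht => if_neg (not_le.mpr ht)
  have key : ∀ s t : ℝ≥0, s ≤ t → dist (H s) (H t) = (t : ℝ) - s := by
    intro s t hst
    rcases le_or_gt t N with htN | htN
    · rw [hagree s (hst.trans htN), hagree t htN, f.2.2.2 s t, dist_nn hst]
    · have htN' : (N : ℝ) ≤ t := by exact_mod_cast htN.le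
      rcases le_or_gt s N with hsN | hsN
      · have hsN' : (s : ℝ) ≤ N := by exact_mod_cast hsN
        rw [hagree s hsN, hHat t htN, planeL1_dist]
        simp only [mkP_zero, mkP_one]
        have hiso := ray_iso f hsN
        have hs1 := hsign s hsN
        have c0 : |F f s 1 - a| = |a - F f s 1| := abs_sub_comm _ _
        rcases hε with rfl | rfl
        · have hb1 : 0 ≤ b - F f s 0 := by linarith [hs1]
          have e1 : |F f s 0 - (b + 1 * ((t : ℝ) - N))| = (b - F f s 0) + ((t : ℝ) - N) := by
            rw [abs_of_nonpos (by linarith)]; ring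
          have e2 : |b - F f s 0| = b - F f s 0 := abs_of_nonneg hb1
          rw [e1, c0]
          linarith
        · have hb1 : 0 ≤ F f s 0 - b := by nlinarith [hs1]
          have e1 : |F f s 0 - (b + (-1) * ((t : ℝ) - N))| = (F f s 0 - b) + ((t : ℝ) - N) := by
            rw [abs_of_nonneg (by linarith)]; ring
          have e2 : |b - F f s 0| = F f s 0 - b := by rw [abs_sub_comm]; exact abs_of_nonneg hb1
          rw [e1, c0]
          linarith
      · rw [hHat s hsN, hHat t (hsN.trans_le hst), planeL1_dist]
        simp only [mkP_zero, mkP_one]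
        have : b + ε * ((s : ℝ) - N) - (b + ε * ((t : ℝ) - N)) = ε * ((s : ℝ) - t) := by ring
        rw [sub_self, abs_zero, add_zero, this, abs_unit_mul hε, abs_sub_comm,
          abs_of_nonneg (by simpa using hst)]
  have hiso : ∀ s t, dist (H s) (H t) = dist s t := by
    intro s t
    rcases le_total s t with h | h
    · rw [key s t h, dist_nn h]
    · rw [dist_comm, key t s h, dist_comm, dist_nn h]
  have h0 : H 0 = 0 := by rw [hagree 0 (zero_le (a := N))]; exact f.2.1
  have hgrid : ∀ t, H t ∈ Grid := by
    intro t
    rcases le_or_gt t N with ht | ht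
    · rw [hagree t ht]; exact f.2.2.1 t
    · rw [hHat t ht]; exact Or.inr ⟨m, by simpa using hm⟩
  refine ⟨mkRay H h0 hgrid hiso, fun t ht => hagree t ht, ⟨2 * N + |a| + |b|, ?_⟩⟩
  intro t
  show dist (H t) (mkP (ε * (t : ℝ)) 0) ≤ 2 * N + |a| + |b|
  rcases le_or_gt t N with ht | ht
  · have ht' : (t : ℝ) ≤ N := by exact_mod_cast ht
    have d1 : dist (H t) (H 0) = (t : ℝ) := by
      rw [dist_comm, key 0 t (zero_le (a := t))]; simp
    have d2 : dist (0 : PlaneL1) (mkP (ε * (t : ℝ)) 0) = (t : ℝ) := by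
      rw [planeL1_dist, planeL1_zero, planeL1_zero]
      simp only [mkP_zero, mkP_one]
      rw [sub_self, abs_zero, add_zero, zero_sub, abs_neg, abs_unit_mul hε,
        abs_of_nonneg t.coe_nonneg]
    calc dist (H t) (mkP (ε * (t : ℝ)) 0)
        ≤ dist (H t) (H 0) + dist (H 0) (mkP (ε * (t : ℝ)) 0) := dist_triangle _ _ _
      _ = (t : ℝ) + (t : ℝ) := by rw [d1, h0, d2]
      _ ≤ 2 * N + |a| + |b| := by linarith [abs_nonneg a, abs_nonneg b]
  · have htN' : (N : ℝ) ≤ t := by exact_mod_cast ht.le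
    rw [hHat t ht, planeL1_dist]
    simp only [mkP_zero, mkP_one]
    rw [sub_zero]
    have e : b + ε * ((t : ℝ) - N) - ε * (t : ℝ) = b - ε * N := by ring
    rw [e]
    have hN : |ε * (N : ℝ)| = (N : ℝ) := by rw [abs_unit_mul hε, abs_of_nonneg N.coe_nonneg]
    have : (0:ℝ) ≤ N := N.coe_nonneg
    linarith [abs_sub (b) (ε * (N:ℝ)), abs_nonneg a]



lemma norm1_eq (g : RaySpace) (u : ℝ≥0) : |F g u 0| + |F g u 1| = (u : ℝ) := by
  have h := ray_iso g (zero_le (a := u))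
  rw [F_zero, F_zero, sub_zero, sub_zero] at h
  simpa using h

lemma follow (g : RaySpace) (ε : ℝ) (hε : ε = 1 ∨ ε = -1)
    (hsign : ∀ t, 0 ≤ ε * F g t 0) (N : ℕ) :
    ∃ h : RaySpace, (∀ t, t ≤ (N : ℝ≥0) → F h t = F (axisH ε hε) t) ∧ AsympRel h g := by
  set Nn : ℝ≥0 := (N : ℝ≥0) with hNn
  set H : ℝ≥0 → PlaneL1 :=
    fun t => if t ≤ Nn then mkP (ε * (t : ℝ)) 0
      else mkP (F g (t - Nn) 0 + ε * (Nn : ℝ)) (F g (t - Nn) 1) with hHdef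
  have hagree : ∀ t, t ≤ Nn → H t = mkP (ε * (t : ℝ)) 0 := fun t ht => if_pos ht
  have hHat : ∀ t, Nn < t →
      H t = mkP (F g (t - Nn) 0 + ε * (Nn : ℝ)) (F g (t - Nn) 1) :=
    fun t ht => if_neg (not_le.mpr ht)
  have hcoe : ∀ t : ℝ≥0, Nn ≤ t → ((t - Nn : ℝ≥0) : ℝ) = (t : ℝ) - (Nn : ℝ) :=
    fun t ht => NNReal.coe_sub ht
  have key : ∀ s t : ℝ≥0, s ≤ t → dist (H s) (H t) = (t : ℝ) - s := by
    intro s t hst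
    have hst' : (s : ℝ) ≤ t := by exact_mod_cast hst
    rcases le_or_gt t Nn with htN | htN
    · rw [hagree s (hst.trans htN), hagree t htN, planeL1_dist]
      simp only [mkP_zero, mkP_one]
      rw [sub_self, abs_zero, add_zero,
        show ε * (s:ℝ) - ε * t = ε * ((s:ℝ) - t) from by ring, abs_unit_mul hε,
        abs_sub_comm, abs_of_nonneg (by linarith)]
    · have htN' : (Nn : ℝ) < t := by exact_mod_cast htN
      have hvc := hcoe t htN.le
      rcases le_or_gt s Nn with hsN | hsN
      · have hsN' : (s : ℝ) ≤ Nn := by exact_mod_cast hsN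
        rw [hagree s hsN, hHat t htN, planeL1_dist]
        simp only [mkP_zero, mkP_one]
        set v := t - Nn with hv
        have hnv := norm1_eq g v
        have hsg := hsign v
        have e0 : |ε * (s:ℝ) - (F g v 0 + ε * (Nn:ℝ))| = |F g v 0| + ((Nn:ℝ) - s) := by
          rcases hε with rfl | rfl
          · have : 0 ≤ F g v 0 := by linarith [hsg]
            rw [show 1 * (s:ℝ) - (F g v 0 + 1 * (Nn:ℝ)) = -(F g v 0 + ((Nn:ℝ) - s)) from by ring,
              abs_neg, abs_of_nonneg (by linarith), abs_of_nonneg this]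
          · have : F g v 0 ≤ 0 := by nlinarith [hsg]
            rw [show (-1) * (s:ℝ) - (F g v 0 + (-1) * (Nn:ℝ)) = -(F g v 0 - ((Nn:ℝ) - s)) from by ring,
              abs_neg, abs_of_nonpos (by linarith), abs_of_nonpos this]
            ring
        rw [e0, show (0:ℝ) - F g v 1 = -(F g v 1) from by ring, abs_neg]
        have : ((v : ℝ≥0) : ℝ) = (t : ℝ) - (Nn : ℝ) := hvc
        linarith
      · have husc := hcoe s hsN.le
        have huv : s - Nn ≤ t - Nn := tsub_le_tsub_right hst _
        have hg := ray_iso g huv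
        rw [hHat s hsN, hHat t (hsN.trans_le hst), planeL1_dist]
        simp only [mkP_zero, mkP_one]
        rw [show F g (s - Nn) 0 + ε * (Nn:ℝ) - (F g (t - Nn) 0 + ε * (Nn:ℝ))
            = F g (s - Nn) 0 - F g (t - Nn) 0 from by ring]
        rw [abs_sub_comm (F g (s - Nn) 0), abs_sub_comm (F g (s - Nn) 1)]
        rw [hg, hvc, husc]
        ring
  have hiso : ∀ s t, dist (H s) (H t) = dist s t := by
    intro s t
    rcases le_total s t with h | h
    · rw [key s t h, dist_nn h]
    · rw [dist_comm, key t s h, dist_comm, dist_nn h]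
  have h0 : H 0 = 0 := by
    rw [hagree 0 (zero_le (a := Nn))]
    simpa using mkP_eq_zero
  have hgrid : ∀ t, H t ∈ Grid := by
    intro t
    rcases le_or_gt t Nn with ht | ht
    · rw [hagree t ht]; exact Or.inr ⟨0, by simp⟩
    · rw [hHat t ht]
      rcases g.2.2.1 (t - Nn) with ⟨n, hn⟩ | ⟨n, hn⟩
      · have hn' : F g (t - Nn) 0 = (n : ℝ) := hn
        rcases hε with rfl | rfl
        · exact Or.inl ⟨n + N, by show F g (t - Nn) 0 + 1 * (Nn:ℝ) = _; rw [hn']; push_cast [hNn]; ring⟩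
        · exact Or.inl ⟨n - N, by show F g (t - Nn) 0 + (-1) * (Nn:ℝ) = _; rw [hn']; push_cast [hNn]; ring⟩
      · exact Or.inr ⟨n, hn⟩
  refine ⟨mkRay H h0 hgrid hiso, fun t ht => by
      show H t = mkP (ε * (t : ℝ)) 0
      exact hagree t ht, ⟨2 * (Nn : ℝ), ?_⟩⟩
  intro t
  show dist (H t) (F g t) ≤ 2 * (Nn : ℝ)
  rcases le_or_gt t Nn with ht | ht
  · have ht' : (t : ℝ) ≤ Nn := by exact_mod_cast ht
    have d1 : dist (H t) (H 0) = (t : ℝ) := by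
      rw [dist_comm, key 0 t (zero_le (a := t))]; simp
    have d2 : dist (F g 0) (F g t) = (t : ℝ) := by
      rw [g.2.2.2 0 t, dist_nn (zero_le (a := t))]; simp
    have hg0 : F g 0 = 0 := g.2.1
    calc dist (H t) (F g t) ≤ dist (H t) (H 0) + dist (F g 0) (F g t) := by
          rw [h0, ← hg0] at *
          exact dist_triangle _ _ _
      _ ≤ 2 * (Nn : ℝ) := by rw [d1, d2]; linarith
  · have hvc := hcoe t ht.le
    have d1 : dist (H t) (F g (t - Nn)) = (Nn : ℝ) := by
      rw [hHat t ht, planeL1_dist]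
      simp only [mkP_zero, mkP_one]
      rw [show F g (t - Nn) 0 + ε * (Nn:ℝ) - F g (t - Nn) 0 = ε * (Nn:ℝ) from by ring,
        sub_self, abs_zero, add_zero, abs_unit_mul hε, abs_of_nonneg Nn.coe_nonneg]
    have d2 : dist (F g (t - Nn)) (F g t) = (Nn : ℝ) := by
      rw [g.2.2.2 (t - Nn) t, dist_nn (tsub_le_self), hvc]
      ring
    calc dist (H t) (F g t) ≤ dist (H t) (F g (t - Nn)) + dist (F g (t - Nn)) (F g t) :=
          dist_triangle _ _ _
      _ ≤ 2 * (Nn : ℝ) := by rw [d1, d2]; linarith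



lemma SS_directed : DirectedOn (· ⊆ ·) SS :=
  fun K1 h1 K2 h2 => ⟨K1 ∪ K2, h1.union h2, Set.subset_union_left, Set.subset_union_right⟩

lemma nbhd_agree {V : Set RaySpace} (hV : IsOpen V) {f : RaySpace} (hf : f ∈ V) :
    ∃ N : ℕ, ∀ h : RaySpace, (∀ t, t ≤ (N : ℝ≥0) → F h t = F f t) → h ∈ V := by
  obtain ⟨W, hWopen, hWV⟩ := isOpen_induced_iff.mp hV
  have hfW : f.1 ∈ W := by rw [← hWV] at hf; exact hf
  have hnhds : W ∈ nhds f.1 := hWopen.mem_nhds hfW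
  have hbasis := UniformOnFun.hasBasis_uniformity ℝ≥0 PlaneL1 SS
    ⟨∅, isCompact_empty⟩ SS_directed
  have hnb := nhds_basis_uniformity' hbasis (x := f.1)
  rw [hnb.mem_iff] at hnhds
  obtain ⟨⟨K, E⟩, ⟨hK, hE⟩, hsub⟩ := hnhds
  obtain ⟨c, hc⟩ := hK.bddAbove
  refine ⟨⌈(c : ℝ)⌉₊, fun h hagr => ?_⟩
  have hcN : c ≤ ((⌈(c : ℝ)⌉₊ : ℕ) : ℝ≥0) := by
    rw [← NNReal.coe_le_coe]; push_cast; exact Nat.le_ceil _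
  have hmem : h.1 ∈ UniformSpace.ball f.1 (UniformOnFun.gen SS K E) := by
    show ∀ x ∈ K, ((UniformOnFun.toFun SS f.1) x, (UniformOnFun.toFun SS h.1) x) ∈ E
    intro x hx
    have hxN : x ≤ ((⌈(c : ℝ)⌉₊ : ℕ) : ℝ≥0) := le_trans (hc hx) hcN
    have := hagr x hxN
    rw [show (UniformOnFun.toFun SS h.1) x = F h x from rfl, this]
    exact refl_mem_uniformity hE
  have : h.1 ∈ W := hsub hmem
  rw [← hWV]
  exact this


end VB

/-- The visual boundary `∂_∞(ℤ²)` with the quotient topology. -/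
def VisualBoundary : Type := Quot AsympRel

noncomputable instance : TopologicalSpace VisualBoundary :=
  inferInstanceAs (TopologicalSpace (Quot AsympRel))

/-- the visual boundary of `ℤ²` with the standard generating set
has the trivial (indiscrete) topology: its only open sets are `∅` and the whole
boundary. -/
theorem visualBoundary_Z2_trivial_topology :
    ∀ U : Set VisualBoundary, IsOpen U → U = ∅ ∨ U = Set.univ := by
  intro U hU
  rcases Set.eq_empty_or_nonempty U with h | ⟨x, hx⟩
  · exact Or.inl h
  right
  have hVopen : IsOpen (Quot.mk AsympRel ⁻¹' U) := hU.preimage continuous_quot_mk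
  set V := Quot.mk AsympRel ⁻¹' U with hVdef
  have step : ∀ r r' : RaySpace, r ∈ V →
      (∀ N : ℕ, ∃ h : RaySpace,
        (∀ t, t ≤ (N : ℝ≥0) → VB.F h t = VB.F r t) ∧ AsympRel h r') →
      r' ∈ V := by
    intro r r' hr hcon
    obtain ⟨N, hN⟩ := VB.nbhd_agree hVopen hr
    obtain ⟨h, hagr, hasym⟩ := hcon N
    have hhV : h ∈ V := hN h hagr
    show Quot.mk AsympRel r' ∈ U
    rw [← Quot.sound hasym]
    exact hhV
  obtain ⟨f0, rfl⟩ := Quot.exists_rep x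
  have hf0 : f0 ∈ V := hx
  have vertToHoriz : ∀ ε0 hε0, VB.axisV ε0 hε0 ∈ V →
      ∀ ε hε, VB.axisH ε hε ∈ V := by
    intro ε0 hε0 hv ε hε
    refine step _ _ hv fun N => ?_
    rcases hε0 with h1 | h1 <;> subst h1
    · refine VB.bend_horiz (VB.axisV 1 (Or.inl rfl)) (N : ℝ≥0) (N : ℤ) ?_ ε hε ?_
      · show VB.mkP 0 (1 * ((N : ℝ≥0) : ℝ)) 1 = _
        rw [VB.mkP_one]; push_cast; ring
      · intro s hs
        simp [VB.F_axisV]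
    · refine VB.bend_horiz (VB.axisV (-1) (Or.inr rfl)) (N : ℝ≥0) (-(N : ℤ)) ?_ ε hε ?_
      · show VB.mkP 0 ((-1) * ((N : ℝ≥0) : ℝ)) 1 = _
        rw [VB.mkP_one]; push_cast; ring
      · intro s hs
        simp [VB.F_axisV]
  have horizToVert : ∀ ε0 hε0, VB.axisH ε0 hε0 ∈ V →
      ∀ ε hε, VB.axisV ε hε ∈ V := by
    intro ε0 hε0 hv ε hε
    refine step _ _ hv fun N => ?_
    rcases hε0 with h1 | h1 <;> subst h1
    · refine VB.bend_vert (VB.axisH 1 (Or.inl rfl)) (N : ℝ≥0) (N : ℤ) ?_ ε hε ?_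
      · show VB.mkP (1 * ((N : ℝ≥0) : ℝ)) 0 0 = _
        rw [VB.mkP_zero]; push_cast; ring
      · intro s hs
        simp [VB.F_axisH]
    · refine VB.bend_vert (VB.axisH (-1) (Or.inr rfl)) (N : ℝ≥0) (-(N : ℤ)) ?_ ε hε ?_
      · show VB.mkP ((-1) * ((N : ℝ≥0) : ℝ)) 0 0 = _
        rw [VB.mkP_zero]; push_cast; ring
      · intro s hs
        simp [VB.F_axisH]
  have axes : ∀ ε hε, VB.axisH ε hε ∈ V := by
    obtain ⟨N0, hN0⟩ := VB.nbhd_agree hVopen hf0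
    rcases f0.2.2.1 (N0 : ℝ≥0) with ⟨m, hm⟩ | ⟨m, hm⟩
    · obtain ⟨ε0, hε0, hsg⟩ := VB.sign_at f0 1 (N0 : ℝ≥0)
      obtain ⟨h, hagr, hasym⟩ := VB.bend_vert f0 (N0 : ℝ≥0) m hm ε0 hε0 hsg
      have hv : VB.axisV ε0 hε0 ∈ V := by
        have hhV : h ∈ V := hN0 h hagr
        show Quot.mk AsympRel (VB.axisV ε0 hε0) ∈ U
        rw [← Quot.sound hasym]
        exact hhV
      exact vertToHoriz ε0 hε0 hv
    · obtain ⟨ε0, hε0, hsg⟩ := VB.sign_at f0 0 (N0 : ℝ≥0)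
      obtain ⟨h, hagr, hasym⟩ := VB.bend_horiz f0 (N0 : ℝ≥0) m hm ε0 hε0 hsg
      have hh : VB.axisH ε0 hε0 ∈ V := by
        have hhV : h ∈ V := hN0 h hagr
        show Quot.mk AsympRel (VB.axisH ε0 hε0) ∈ U
        rw [← Quot.sound hasym]
        exact hhV
      have hv := horizToVert ε0 hε0 hh 1 (Or.inl rfl)
      exact vertToHoriz 1 (Or.inl rfl) hv
  apply Set.eq_univ_of_forall
  intro y
  obtain ⟨g, rfl⟩ := Quot.exists_rep y
  obtain ⟨ε, hε, hsg⟩ := VB.sign_global g 0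
  exact step (VB.axisH ε hε) g (axes ε hε) fun N => VB.follow g ε hε hsg N
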